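/- Let G be the group with presentation ⟨x, y | x y x = y x y⟩ (the fundamental group of the complement of the trefoil knot). Then for every irreducible representation ρ : G → SL₂(ℂ), one has tr ρ(x² y x² y) = −2. -/
import Mathlib


abbrev SL2C := Matrix.SpecialLinearGroup (Fin 2) ℂ

/-- A representation `ρ : G → SL₂(ℂ)` is irreducible if the matrices `ρ g` have no
common eigenvector, i.e. there is no one-dimensional invariant subspace of `ℂ²`. -/
def IsIrreducibleRep {G : Type} [Group G] (ρ : G →* SL2C) : Prop :=
  ¬ ∃ v : Fin 2 → ℂ, v ≠ 0 ∧ ∀ g : G, ∃ c : ℂ,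
    Matrix.mulVec (ρ g : Matrix (Fin 2) (Fin 2) ℂ) v = c • v

/-- The single relation `x y x = y x y` of the trefoil knot group
`⟨x, y ∣ x y x = y x y⟩`; generators `x, y` are `0, 1`. -/
def trefoilRels : Set (FreeGroup (Fin 2)) :=
  {FreeGroup.of 0 * FreeGroup.of 1 * FreeGroup.of 0 *
    (FreeGroup.of 1 * FreeGroup.of 0 * FreeGroup.of 1)⁻¹}

open Matrix

section aux

lemma entries_eq_zero {N : Matrix (Fin 2) (Fin 2) ℂ} (h00 : N 0 0 = 0) (h01 : N 0 1 = 0)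
    (h10 : N 1 0 = 0) (h11 : N 1 1 = 0) : N = 0 := by
  ext i j; fin_cases i <;> fin_cases j <;> assumption

lemma ker_vec (N : Matrix (Fin 2) (Fin 2) ℂ) (h : N 0 0 * N 1 1 = N 0 1 * N 1 0) :
    ∃ v : Fin 2 → ℂ, v ≠ 0 ∧ N.mulVec v = 0 := by
  by_cases hN : N = 0
  · exact ⟨![1, 0], by simp, by simp [hN]⟩
  by_cases h0 : N 0 0 = 0 ∧ N 0 1 = 0
  · refine ⟨![N 1 1, -(N 1 0)], ?_, ?_⟩
    · intro hv
      exact hN (entries_eq_zero h0.1 h0.2 (by simpa using congrFun hv 1) (by simpa using congrFun hv 0))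
    · funext i
      fin_cases i <;> simp [Matrix.mulVec, dotProduct, Fin.sum_univ_two, h0.1, h0.2] <;>
        first | ring1 | linear_combination h | linear_combination -h
  · refine ⟨![N 0 1, -(N 0 0)], ?_, ?_⟩
    · intro hv
      apply h0
      exact ⟨by simpa using congrFun hv 1, by simpa using congrFun hv 0⟩
    · funext i
      fin_cases i <;> simp [Matrix.mulVec, dotProduct, Fin.sum_univ_two] <;>
        first | ring1 | linear_combination h | linear_combination -h

lemma ker_dim1 {N : Matrix (Fin 2) (Fin 2) ℂ} {v w : Fin 2 → ℂ} (hN : N ≠ 0)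
    (hv : N.mulVec v = 0) (hw : N.mulVec w = 0) (hv0 : v ≠ 0) :
    ∃ c : ℂ, w = c • v := by
  have hv1 : N 0 0 * v 0 + N 0 1 * v 1 = 0 := by
    have := congrFun hv 0; simpa [Matrix.mulVec, dotProduct, Fin.sum_univ_two] using this
  have hv2 : N 1 0 * v 0 + N 1 1 * v 1 = 0 := by
    have := congrFun hv 1; simpa [Matrix.mulVec, dotProduct, Fin.sum_univ_two] using this
  have hw1 : N 0 0 * w 0 + N 0 1 * w 1 = 0 := by
    have := congrFun hw 0; simpa [Matrix.mulVec, dotProduct, Fin.sum_univ_two] using this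
  have hw2 : N 1 0 * w 0 + N 1 1 * w 1 = 0 := by
    have := congrFun hw 1; simpa [Matrix.mulVec, dotProduct, Fin.sum_univ_two] using this
  have cross : v 0 * w 1 - v 1 * w 0 = 0 := by
    by_contra hc
    apply hN
    apply entries_eq_zero
    · have : N 0 0 * (v 0 * w 1 - v 1 * w 0) = 0 := by linear_combination w 1 * hv1 - v 1 * hw1
      exact (mul_eq_zero.mp this).resolve_right hc
    · have : N 0 1 * (v 0 * w 1 - v 1 * w 0) = 0 := by linear_combination (-(w 0)) * hv1 + v 0 * hw1
      exact (mul_eq_zero.mp this).resolve_right hc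
    · have : N 1 0 * (v 0 * w 1 - v 1 * w 0) = 0 := by linear_combination w 1 * hv2 - v 1 * hw2
      exact (mul_eq_zero.mp this).resolve_right hc
    · have : N 1 1 * (v 0 * w 1 - v 1 * w 0) = 0 := by linear_combination (-(w 0)) * hv2 + v 0 * hw2
      exact (mul_eq_zero.mp this).resolve_right hc
  by_cases h00 : v 0 = 0
  · have h1 : v 1 ≠ 0 := by
      intro h1; apply hv0; funext i; fin_cases i <;> simp [h00, h1]
    refine ⟨w 1 / v 1, ?_⟩
    funext i
    fin_cases i
    · have : v 1 * w 0 = 0 := by linear_combination -cross + w 1 * h00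
      have := (mul_eq_zero.mp this).resolve_left h1
      simp [this, h00]
    · simp [Pi.smul_apply]; field_simp
  · refine ⟨w 0 / v 0, ?_⟩
    funext i
    fin_cases i
    · simp [Pi.smul_apply]; field_simp
    · simp [Pi.smul_apply]; field_simp
      linear_combination cross


lemma exists_eigenvalue2 (m : Matrix (Fin 2) (Fin 2) ℂ) :
    ∃ lam : ℂ, (m 0 0 - lam) * (m 1 1 - lam) = m 0 1 * m 1 0 := by
  obtain ⟨s, hs⟩ := IsAlgClosed.exists_pow_nat_eq
    ((m 0 0 + m 1 1) ^ 2 - 4 * (m 0 0 * m 1 1 - m 0 1 * m 1 0)) (n := 2) (by norm_num)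
  refine ⟨(m 0 0 + m 1 1 + s) / 2, ?_⟩
  field_simp
  linear_combination hs

lemma sq_eq_one_cases {z : Matrix (Fin 2) (Fin 2) ℂ} (hdet : z.det = 1) (hz : z * z = 1) :
    z = 1 ∨ z = -1 := by
  rw [Matrix.det_fin_two] at hdet
  have e00 : z 0 0 * z 0 0 + z 0 1 * z 1 0 = 1 := by
    have := congrFun (congrFun hz 0) 0
    simpa [Matrix.mul_apply, Fin.sum_univ_two, Matrix.one_apply] using this
  have e01 : z 0 0 * z 0 1 + z 0 1 * z 1 1 = 0 := by
    have := congrFun (congrFun hz 0) 1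
    simpa [Matrix.mul_apply, Fin.sum_univ_two, Matrix.one_apply] using this
  have e10 : z 1 0 * z 0 0 + z 1 1 * z 1 0 = 0 := by
    have := congrFun (congrFun hz 1) 0
    simpa [Matrix.mul_apply, Fin.sum_univ_two, Matrix.one_apply] using this
  have hps : z 0 0 * (z 0 0 + z 1 1) = 2 := by linear_combination e00 + hdet
  have hne : z 0 0 + z 1 1 ≠ 0 := by
    intro h; rw [h, mul_zero] at hps; norm_num at hps
  have hq : z 0 1 = 0 := by
    have : z 0 1 * (z 0 0 + z 1 1) = 0 := by linear_combination e01
    exact (mul_eq_zero.mp this).resolve_right hne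
  have hr : z 1 0 = 0 := by
    have : z 1 0 * (z 0 0 + z 1 1) = 0 := by linear_combination e10
    exact (mul_eq_zero.mp this).resolve_right hne
  have hp2 : z 0 0 * z 0 0 = 1 := by linear_combination e00 - z 1 0 * hq
  have hp0 : z 0 0 ≠ 0 := by intro h; rw [h, zero_mul] at hp2; norm_num at hp2
  have hs1 : z 0 0 * z 1 1 = 1 := by linear_combination hdet + z 1 0 * hq
  have h11 : z 1 1 = z 0 0 := by
    have : z 0 0 * (z 1 1 - z 0 0) = 0 := by linear_combination hs1 - hp2
    have := (mul_eq_zero.mp this).resolve_left hp0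
    linear_combination this
  rcases mul_self_eq_one_iff.mp hp2 with h | h
  · left; ext i j; fin_cases i <;> fin_cases j <;>
      simp [hq, hr, h11, h, Matrix.one_apply]
  · right; ext i j; fin_cases i <;> fin_cases j <;>
      simp [hq, hr, h11, h, Matrix.one_apply]

end aux

lemma trefoil_rel (ρ : PresentedGroup trefoilRels →* SL2C) :
    ρ (PresentedGroup.of 0) * ρ (PresentedGroup.of 1) * ρ (PresentedGroup.of 0) =
    ρ (PresentedGroup.of 1) * ρ (PresentedGroup.of 0) * ρ (PresentedGroup.of 1) := by
  have h1 : PresentedGroup.mk trefoilRels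
      (FreeGroup.of 0 * FreeGroup.of 1 * FreeGroup.of 0 *
        (FreeGroup.of 1 * FreeGroup.of 0 * FreeGroup.of 1)⁻¹) = 1 := by
    apply (QuotientGroup.eq_one_iff _).mpr
    exact Subgroup.subset_normalClosure rfl
  rw [_root_.map_mul, _root_.map_inv] at h1
  have h2 := mul_inv_eq_one.mp h1
  have h3 : (PresentedGroup.of 0 : PresentedGroup trefoilRels) * PresentedGroup.of 1 *
      PresentedGroup.of 0 = PresentedGroup.of 1 * PresentedGroup.of 0 * PresentedGroup.of 1 := by
    simpa [PresentedGroup.of, _root_.map_mul] using h2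
  rw [← _root_.map_mul, ← _root_.map_mul, h3, _root_.map_mul, _root_.map_mul]

lemma comm_all (ρ : PresentedGroup trefoilRels →* SL2C) (M : SL2C)
    (h0 : M * ρ (PresentedGroup.of 0) = ρ (PresentedGroup.of 0) * M)
    (h1 : M * ρ (PresentedGroup.of 1) = ρ (PresentedGroup.of 1) * M) :
    ∀ g, M * ρ g = ρ g * M := by
  intro g
  have hg : g ∈ Subgroup.comap ρ (Subgroup.centralizer {M}) := by
    apply PresentedGroup.generated_by
    intro j
    fin_cases j
    · exact Subgroup.mem_comap.mpr (Subgroup.mem_centralizer_iff.mpr (by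
        intro m hm; rw [Set.mem_singleton_iff] at hm; rw [hm]; exact h0))
    · exact Subgroup.mem_comap.mpr (Subgroup.mem_centralizer_iff.mpr (by
        intro m hm; rw [Set.mem_singleton_iff] at hm; rw [hm]; exact h1))
  exact Subgroup.mem_centralizer_iff.mp (Subgroup.mem_comap.mp hg) M rfl

lemma eig_all (ρ : PresentedGroup trefoilRels →* SL2C) (v : Fin 2 → ℂ) (hv : v ≠ 0)
    (h0 : ∃ c : ℂ, Matrix.mulVec (ρ (PresentedGroup.of 0) : Matrix (Fin 2) (Fin 2) ℂ) v = c • v)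
    (h1 : ∃ c : ℂ, Matrix.mulVec (ρ (PresentedGroup.of 1) : Matrix (Fin 2) (Fin 2) ℂ) v = c • v) :
    ∀ g, ∃ c : ℂ, Matrix.mulVec (ρ g : Matrix (Fin 2) (Fin 2) ℂ) v = c • v := by
  intro g
  have key : ∀ (a : PresentedGroup trefoilRels) (c : ℂ),
      Matrix.mulVec (ρ a : Matrix (Fin 2) (Fin 2) ℂ) v = c • v → c ≠ 0 := by
    intro a c hc h0'
    apply hv
    have hinv : ((ρ a⁻¹ : SL2C) : Matrix (Fin 2) (Fin 2) ℂ) *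
        ((ρ a : SL2C) : Matrix (Fin 2) (Fin 2) ℂ) = 1 := by
      rw [← Matrix.SpecialLinearGroup.coe_mul, ← _root_.map_mul, inv_mul_cancel, _root_.map_one,
        Matrix.SpecialLinearGroup.coe_one]
    calc v = (1 : Matrix (Fin 2) (Fin 2) ℂ).mulVec v := (Matrix.one_mulVec v).symm
      _ = ((ρ a⁻¹ : SL2C) : Matrix (Fin 2) (Fin 2) ℂ).mulVec
          (((ρ a : SL2C) : Matrix (Fin 2) (Fin 2) ℂ).mulVec v) := by
          rw [Matrix.mulVec_mulVec, hinv]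
      _ = 0 := by rw [hc, h0', zero_smul, Matrix.mulVec_zero]
  let S : Subgroup (PresentedGroup trefoilRels) :=
    { carrier := {a | ∃ c : ℂ, Matrix.mulVec (ρ a : Matrix (Fin 2) (Fin 2) ℂ) v = c • v}
      one_mem' := ⟨1, by simp⟩
      mul_mem' := by
        rintro a b ⟨ca, hca⟩ ⟨cb, hcb⟩
        refine ⟨ca * cb, ?_⟩
        rw [_root_.map_mul, Matrix.SpecialLinearGroup.coe_mul, ← Matrix.mulVec_mulVec, hcb,
          Matrix.mulVec_smul, hca, smul_smul, mul_comm cb ca]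
      inv_mem' := by
        rintro a ⟨ca, hca⟩
        have hca0 : ca ≠ 0 := key a ca hca
        refine ⟨ca⁻¹, ?_⟩
        have hinv : ((ρ a⁻¹ : SL2C) : Matrix (Fin 2) (Fin 2) ℂ) *
            ((ρ a : SL2C) : Matrix (Fin 2) (Fin 2) ℂ) = 1 := by
          rw [← Matrix.SpecialLinearGroup.coe_mul, ← _root_.map_mul, inv_mul_cancel, _root_.map_one,
            Matrix.SpecialLinearGroup.coe_one]
        have : ca • Matrix.mulVec ((ρ a⁻¹ : SL2C) : Matrix (Fin 2) (Fin 2) ℂ) v = v := by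
          rw [← Matrix.mulVec_smul, ← hca, Matrix.mulVec_mulVec, hinv, Matrix.one_mulVec]
        calc Matrix.mulVec ((ρ a⁻¹ : SL2C) : Matrix (Fin 2) (Fin 2) ℂ) v
            = ca⁻¹ • (ca • Matrix.mulVec ((ρ a⁻¹ : SL2C) : Matrix (Fin 2) (Fin 2) ℂ) v) := by
              rw [smul_smul, inv_mul_cancel₀ hca0, one_smul]
          _ = ca⁻¹ • v := by rw [this] }
  exact PresentedGroup.generated_by trefoilRels S (by intro j; fin_cases j <;> assumption) g


/-- For every irreducible `SL₂(ℂ)` representation `ρ` of the trefoil knot group,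
`tr ρ(x² y x² y) = -2`. -/
theorem trefoil_trace_x2yx2y (ρ : PresentedGroup trefoilRels →* SL2C)
    (hρ : IsIrreducibleRep ρ) :
    Matrix.trace ((ρ (PresentedGroup.of 0 ^ 2 * PresentedGroup.of 1 *
      PresentedGroup.of 0 ^ 2 * PresentedGroup.of 1) : Matrix (Fin 2) (Fin 2) ℂ)) = -2 := by
  set A := ρ (PresentedGroup.of 0) with hA
  set B := ρ (PresentedGroup.of 1) with hB
  have h : A * B * A = B * A * B := trefoil_rel ρ
  have hval : ρ (PresentedGroup.of 0 ^ 2 * PresentedGroup.of 1 *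
      PresentedGroup.of 0 ^ 2 * PresentedGroup.of 1) = (A * B) ^ 3 := by
    rw [_root_.map_mul, _root_.map_mul, _root_.map_mul, map_pow, ← hA, ← hB]
    calc A ^ 2 * B * A ^ 2 * B = A * (A * B * A) * (A * B) := by simp only [pow_succ, pow_zero, one_mul, mul_assoc]
      _ = A * (B * A * B) * (A * B) := by rw [h]
      _ = (A * B) ^ 3 := by simp only [pow_succ, pow_zero, one_mul, mul_assoc]
  rw [hval]
  set M : SL2C := (A * B) ^ 3 with hMdef
  have hBA3 : (B * A) ^ 3 = (A * B) ^ 3 := by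
    have e1 : (A * B) ^ 3 = A * B * A * (B * A * B) := by simp only [pow_succ, pow_zero, one_mul, mul_assoc]
    have e2 : (B * A) ^ 3 = B * A * B * (A * B * A) := by simp only [pow_succ, pow_zero, one_mul, mul_assoc]
    rw [e1, e2, h]
  have hMA : M * A = A * M := by
    calc M * A = A * (B * A) ^ 3 := by rw [hMdef]; simp only [pow_succ, pow_zero, one_mul, mul_assoc]
      _ = A * M := by rw [hBA3]
  have hMB : M * B = B * M := by
    rw [hMdef]
    calc (A * B) ^ 3 * B = (B * A) ^ 3 * B := by rw [hBA3]
      _ = B * (A * B) ^ 3 := by simp only [pow_succ, pow_zero, one_mul, mul_assoc]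
  have hc : ∀ g, M * ρ g = ρ g * M := comm_all ρ M hMA hMB
  set m : Matrix (Fin 2) (Fin 2) ℂ := (M : Matrix (Fin 2) (Fin 2) ℂ) with hm
  have hdet : m.det = 1 := M.prop
  rw [Matrix.det_fin_two] at hdet
  obtain ⟨lam, hlam⟩ := exists_eigenvalue2 m
  by_cases hscalar : m = lam • (1 : Matrix (Fin 2) (Fin 2) ℂ)
  · -- scalar case
    have hl2 : lam * lam = 1 := by
      rw [hscalar] at hdet
      simpa [Matrix.smul_apply, Matrix.one_apply] using hdet
    rcases mul_self_eq_one_iff.mp hl2 with h1 | h1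
    · -- lam = 1 : contradiction with irreducibility
      exfalso
      have hM1 : M = 1 := by
        apply Subtype.ext
        rw [Matrix.SpecialLinearGroup.coe_one, ← hm, hscalar, h1, one_smul]
      have hZ2 : (A * B * A) * (A * B * A) = (1 : SL2C) := by
        rw [← hM1, hMdef]
        calc (A * B * A) * (A * B * A) = (B * A * B) * (B * A * B) := by rw [h]
          _ = (A * B * A) * (B * A * B) := by rw [h]
          _ = (A * B) ^ 3 := by simp only [pow_succ, pow_zero, one_mul, mul_assoc]
      have hz2m : ((A * B * A : SL2C) : Matrix (Fin 2) (Fin 2) ℂ) *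
          ((A * B * A : SL2C) : Matrix (Fin 2) (Fin 2) ℂ) = 1 := by
        rw [← Matrix.SpecialLinearGroup.coe_mul, hZ2, Matrix.SpecialLinearGroup.coe_one]
      have hzdet : ((A * B * A : SL2C) : Matrix (Fin 2) (Fin 2) ℂ).det = 1 := (A * B * A).prop
      have hzcases := sq_eq_one_cases hzdet hz2m
      obtain ⟨e, he0, hze⟩ : ∃ e : ℂ, e ≠ 0 ∧
          ((A * B * A : SL2C) : Matrix (Fin 2) (Fin 2) ℂ) = e • (1 : Matrix (Fin 2) (Fin 2) ℂ) := by
        rcases hzcases with h' | h'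
        · exact ⟨1, one_ne_zero, by rw [h', one_smul]⟩
        · exact ⟨-1, by norm_num, by rw [h']; simp⟩
      set a : Matrix (Fin 2) (Fin 2) ℂ := (A : Matrix (Fin 2) (Fin 2) ℂ) with ha
      set b : Matrix (Fin 2) (Fin 2) ℂ := (B : Matrix (Fin 2) (Fin 2) ℂ) with hb
      have haba : a * b * a = e • (1 : Matrix (Fin 2) (Fin 2) ℂ) := by
        rw [ha, hb, ← Matrix.SpecialLinearGroup.coe_mul, ← Matrix.SpecialLinearGroup.coe_mul, hze]
      -- eigenvector of a
      obtain ⟨mu, hmu⟩ := exists_eigenvalue2 a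
      have hNdet : (a - mu • 1) 0 0 * (a - mu • 1) 1 1 = (a - mu • 1) 0 1 * (a - mu • 1) 1 0 := by
        simp [Matrix.sub_apply, Matrix.smul_apply, Matrix.one_apply]
        linear_combination hmu
      obtain ⟨v, hv0, hvk⟩ := ker_vec (a - mu • 1) hNdet
      have hav : a.mulVec v = mu • v := by
        have := hvk
        rw [Matrix.sub_mulVec, Matrix.smul_mulVec, Matrix.one_mulVec, sub_eq_zero] at this
        exact this
      have hainv : ((A⁻¹ : SL2C) : Matrix (Fin 2) (Fin 2) ℂ) * a = 1 := by
        rw [ha, ← Matrix.SpecialLinearGroup.coe_mul, inv_mul_cancel,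
          Matrix.SpecialLinearGroup.coe_one]
      have hmu0 : mu ≠ 0 := by
        intro h0
        apply hv0
        calc v = (1 : Matrix (Fin 2) (Fin 2) ℂ).mulVec v := (Matrix.one_mulVec v).symm
          _ = ((A⁻¹ : SL2C) : Matrix (Fin 2) (Fin 2) ℂ).mulVec (a.mulVec v) := by
              rw [Matrix.mulVec_mulVec, hainv]
          _ = 0 := by rw [hav, h0, zero_smul, Matrix.mulVec_zero]
      have hainvv : ((A⁻¹ : SL2C) : Matrix (Fin 2) (Fin 2) ℂ).mulVec v = mu⁻¹ • v := by
        have h1' : ((A⁻¹ : SL2C) : Matrix (Fin 2) (Fin 2) ℂ).mulVec (a.mulVec v) = v := by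
          rw [Matrix.mulVec_mulVec, hainv, Matrix.one_mulVec]
        rw [hav, Matrix.mulVec_smul] at h1'
        calc ((A⁻¹ : SL2C) : Matrix (Fin 2) (Fin 2) ℂ).mulVec v
            = mu⁻¹ • (mu • ((A⁻¹ : SL2C) : Matrix (Fin 2) (Fin 2) ℂ).mulVec v) := by
              rw [smul_smul, inv_mul_cancel₀ hmu0, one_smul]
          _ = mu⁻¹ • v := by rw [h1']
      have hbv : b.mulVec v = (e * mu⁻¹ * mu⁻¹) • v := by
        have h1' : a.mulVec (b.mulVec (a.mulVec v)) = e • v := by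
          rw [Matrix.mulVec_mulVec, Matrix.mulVec_mulVec, haba, Matrix.smul_mulVec,
            Matrix.one_mulVec]
        rw [hav, Matrix.mulVec_smul, Matrix.mulVec_smul] at h1'
        have h3' : a.mulVec (b.mulVec v) = (mu⁻¹ * e) • v := by
          calc a.mulVec (b.mulVec v) = mu⁻¹ • (mu • a.mulVec (b.mulVec v)) := by
                rw [smul_smul, inv_mul_cancel₀ hmu0, one_smul]
            _ = mu⁻¹ • (e • v) := by rw [h1']
            _ = (mu⁻¹ * e) • v := by rw [smul_smul]
        calc b.mulVec v
            = ((A⁻¹ : SL2C) : Matrix (Fin 2) (Fin 2) ℂ).mulVec (a.mulVec (b.mulVec v)) := by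
              rw [Matrix.mulVec_mulVec (b.mulVec v) _ a, hainv, Matrix.one_mulVec]
          _ = ((A⁻¹ : SL2C) : Matrix (Fin 2) (Fin 2) ℂ).mulVec ((mu⁻¹ * e) • v) := by rw [h3']
          _ = (mu⁻¹ * e) • ((A⁻¹ : SL2C) : Matrix (Fin 2) (Fin 2) ℂ).mulVec v := by
              rw [Matrix.mulVec_smul]
          _ = (mu⁻¹ * e) • (mu⁻¹ • v) := by rw [hainvv]
          _ = (e * mu⁻¹ * mu⁻¹) • v := by rw [smul_smul]; congr 1; ring
      exact hρ ⟨v, hv0, eig_all ρ v hv0 ⟨mu, hav⟩ ⟨e * mu⁻¹ * mu⁻¹, hbv⟩⟩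
    · -- lam = -1 : trace = -2
      rw [hscalar, h1]
      simp [Matrix.trace_fin_two, Matrix.smul_apply, Matrix.one_apply]
  · -- nonscalar case : contradiction
    exfalso
    set N : Matrix (Fin 2) (Fin 2) ℂ := m - lam • 1 with hN
    have hNdet : N 0 0 * N 1 1 = N 0 1 * N 1 0 := by
      simp [hN, Matrix.sub_apply, Matrix.smul_apply, Matrix.one_apply]
      linear_combination hlam
    have hNne : N ≠ 0 := by
      intro h0
      exact hscalar (by rw [← sub_eq_zero]; exact h0)
    obtain ⟨v, hv0, hvk⟩ := ker_vec N hNdet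
    apply hρ
    refine ⟨v, hv0, fun g => ?_⟩
    have hcg : m * ((ρ g : SL2C) : Matrix (Fin 2) (Fin 2) ℂ) =
        ((ρ g : SL2C) : Matrix (Fin 2) (Fin 2) ℂ) * m := by
      rw [hm, ← Matrix.SpecialLinearGroup.coe_mul, ← Matrix.SpecialLinearGroup.coe_mul, hc g]
    have hNg : N * ((ρ g : SL2C) : Matrix (Fin 2) (Fin 2) ℂ) =
        ((ρ g : SL2C) : Matrix (Fin 2) (Fin 2) ℂ) * N := by
      rw [hN, Matrix.sub_mul, Matrix.mul_sub, hcg, Matrix.smul_mul, Matrix.one_mul,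
        Matrix.mul_smul, Matrix.mul_one]
    have hkerg : N.mulVec (((ρ g : SL2C) : Matrix (Fin 2) (Fin 2) ℂ).mulVec v) = 0 := by
      rw [Matrix.mulVec_mulVec, hNg, ← Matrix.mulVec_mulVec, hvk, Matrix.mulVec_zero]
    exact ker_dim1 hNne hvk hkerg hv0
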